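/- arXiv:2511.01726 — 4 statements merged into one kernel-verified Lean document; each statement's English description precedes it below -/
import Mathlib

section
/- Let N be a positive integer and g : ℝ → ℝ a bounded function supported in [-N/2, N/2] satisfying the partition of unity property ∑_{n∈ℤ} g(x - n) = 1 for all x. Define k(x) = ∑_{n=-N+1}^{N-1} a_n g(x+n) where a_0 = b and a_n + a_{-n} = 2b for n = 1,…,N-1. Then for almost every x, ∑_{m∈ℤ} g(x+m) k(x+m) = b. -/
open MeasureTheory Set

theorem stmt_0 (N : ℕ) (hN : 0 < N) (g : ℝ → ℝ)
    (hbdd : ∃ C : ℝ, ∀ x, |g x| ≤ C)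
    (hsupp : ∀ x : ℝ, x ∉ Set.Icc (-(N : ℝ) / 2) ((N : ℝ) / 2) → g x = 0)
    (hPoU : ∀ x : ℝ, ∑' n : ℤ, g (x - n) = 1)
    (b : ℝ) (hb : 0 < b) (a : ℤ → ℝ)
    (ha0 : a 0 = b)
    (hasym : ∀ n : ℤ, 1 ≤ n → n ≤ (N : ℤ) - 1 → a n + a (-n) = 2 * b)
    (k : ℝ → ℝ)
    (hk : ∀ x : ℝ, k x = ∑ n ∈ Finset.Icc (-(N : ℤ) + 1) ((N : ℤ) - 1), a n * g (x + n)) :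
    ∀ᵐ x : ℝ, ∑' m : ℤ, g (x + m) * k (x + m) = b := by
  classical
  have hA : ∀ j : ℤ, -(N:ℤ)+1 ≤ j → j ≤ (N:ℤ)-1 → a j + a (-j) = 2*b := by
    intro j h1 h2
    rcases lt_trichotomy j 0 with h | h | h
    · have := hasym (-j) (by omega) (by omega)
      simp only [neg_neg] at this
      linarith
    · subst h; simp only [neg_zero, ha0]; ring
    · exact hasym j (by omega) (by omega)
  have key : ∀ x : ℝ, (∀ m : ℤ, x + m ≠ (N:ℝ)/2 ∧ x + m ≠ -(N:ℝ)/2) →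
      ∑' m : ℤ, g (x + m) * k (x + m) = b := by
    intro x hx
    set F : Finset ℤ := Finset.Icc ⌈-(N:ℝ)/2 - x⌉ ⌊(N:ℝ)/2 - x⌋ with hFdef
    have hF0 : ∀ m : ℤ, m ∉ F → g (x + m) = 0 := by
      intro m hm
      apply hsupp
      intro hmem
      rw [Set.mem_Icc] at hmem
      apply hm
      rw [hFdef, Finset.mem_Icc]
      constructor
      · refine Int.ceil_le.mpr ?_
        have := hmem.1
        push_cast
        linarith
      · refine Int.le_floor.mpr ?_
        have := hmem.2
        push_cast
        linarith
    have hstrict : ∀ m : ℤ, g (x + m) ≠ 0 →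
        -(N:ℝ)/2 < x + m ∧ x + m < (N:ℝ)/2 := by
      intro m hm
      have h1 : x + (m:ℝ) ∈ Set.Icc (-(N:ℝ)/2) ((N:ℝ)/2) := by
        by_contra h; exact hm (hsupp _ h)
      rw [Set.mem_Icc] at h1
      obtain ⟨hne1, hne2⟩ := hx m
      exact ⟨lt_of_le_of_ne h1.1 (Ne.symm hne2), lt_of_le_of_ne h1.2 hne1⟩
    have hsum1 : ∑ m ∈ F, g (x + m) = 1 := by
      have h1 : ∑' m : ℤ, g (x + m) = ∑ m ∈ F, g (x + m) :=
        tsum_eq_sum (fun m hm => hF0 m hm)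
      have h2 : ∑' m : ℤ, g (x + m) = ∑' n : ℤ, g (x - n) := by
        rw [← (Equiv.neg ℤ).tsum_eq (fun n : ℤ => g (x - n))]
        apply tsum_congr
        intro m
        simp [sub_neg_eq_add]
      rw [← h1, h2, hPoU]
    have hpair : ∀ m p : ℤ, (a (p - m) + a (m - p)) * (g (x + m) * g (x + p)) =
        2 * b * (g (x + m) * g (x + p)) := by
      intro m p
      by_cases hm : g (x + m) = 0
      · simp [hm]
      by_cases hp : g (x + p) = 0
      · simp [hp]
      obtain ⟨hm1, hm2⟩ := hstrict m hm
      obtain ⟨hp1, hp2⟩ := hstrict p hp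
      have hj1 : p - m < (N:ℤ) := by
        have : ((p - m : ℤ) : ℝ) < ((N:ℤ) : ℝ) := by push_cast; linarith
        exact_mod_cast this
      have hj2 : -(N:ℤ) < p - m := by
        have : ((-(N:ℤ) : ℤ) : ℝ) < ((p - m : ℤ) : ℝ) := by push_cast; linarith
        exact_mod_cast this
      have hAj := hA (p - m) (by omega) (by omega)
      have hmp : m - p = -(p - m) := by ring
      rw [hmp, hAj]
    set J : Finset ℤ := Finset.Icc (-(N:ℤ)+1) ((N:ℤ)-1) with hJdef
    have hstep : ∑' m : ℤ, g (x + m) * k (x + m)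
        = ∑ m ∈ F, ∑ p ∈ F, a (p - m) * (g (x + m) * g (x + p)) := by
      rw [tsum_eq_sum (s := F) (fun m hm => by rw [hF0 m hm, zero_mul])]
      apply Finset.sum_congr rfl
      intro m _
      rw [hk, Finset.mul_sum]
      have hinj : Set.InjOn (fun n : ℤ => m + n) ↑J := fun u _ v _ h => by
        simpa using h
      have stepA : ∑ n ∈ J, g (x + m) * (a n * g (x + m + n))
          = ∑ p ∈ J.image (fun n => m + n),
              a (p - m) * (g (x + m) * g (x + p)) := by
        rw [Finset.sum_image (fun u hu v hv h => by omega)]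
        apply Finset.sum_congr rfl
        intro n _
        have hc : ((m + n : ℤ) : ℝ) = (m : ℝ) + n := by push_cast; ring
        rw [hc]
        have : m + n - m = n := by ring
        rw [this]
        ring_nf
      rw [stepA]
      have hsub1 : J.image (fun n => m + n) ⊆ (J.image (fun n => m + n)) ∪ F :=
        Finset.subset_union_left
      have hsub2 : F ⊆ (J.image (fun n => m + n)) ∪ F :=
        Finset.subset_union_right
      rw [Finset.sum_subset hsub1 ?h1, ← Finset.sum_subset hsub2 ?hh2]
      case h1 =>
        intro p hpU hpI
        by_cases hgm : g (x + m) = 0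
        · rw [hgm]; ring
        by_cases hgp : g (x + p) = 0
        · rw [hgp]; ring
        exfalso
        obtain ⟨hm1, hm2⟩ := hstrict m hgm
        obtain ⟨hp1, hp2⟩ := hstrict p hgp
        apply hpI
        rw [Finset.mem_image]
        refine ⟨p - m, ?_, by ring⟩
        rw [hJdef, Finset.mem_Icc]
        have hj1 : p - m < (N:ℤ) := by
          have : ((p - m : ℤ) : ℝ) < ((N:ℤ) : ℝ) := by push_cast; linarith
          exact_mod_cast this
        have hj2 : -(N:ℤ) < p - m := by
          have : ((-(N:ℤ) : ℤ) : ℝ) < ((p - m : ℤ) : ℝ) := by push_cast; linarith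
          exact_mod_cast this
        omega
      case hh2 =>
        intro p _ hpF
        rw [hF0 p hpF]
        ring
    have hswap : ∑ m ∈ F, ∑ p ∈ F, a (p - m) * (g (x + m) * g (x + p))
        = ∑ m ∈ F, ∑ p ∈ F, a (m - p) * (g (x + m) * g (x + p)) := by
      rw [Finset.sum_comm]
      apply Finset.sum_congr rfl
      intro m _
      apply Finset.sum_congr rfl
      intro p _
      ring
    have hdouble : (∑ m ∈ F, ∑ p ∈ F, a (p - m) * (g (x + m) * g (x + p)))
        + (∑ m ∈ F, ∑ p ∈ F, a (m - p) * (g (x + m) * g (x + p)))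
        = ∑ m ∈ F, ∑ p ∈ F, 2 * b * (g (x + m) * g (x + p)) := by
      rw [← Finset.sum_add_distrib]
      apply Finset.sum_congr rfl
      intro m _
      rw [← Finset.sum_add_distrib]
      apply Finset.sum_congr rfl
      intro p _
      rw [← add_mul]
      exact hpair m p
    have hfinal : ∑ m ∈ F, ∑ p ∈ F, 2 * b * (g (x + m) * g (x + p)) = 2 * b := by
      have heq : ∑ m ∈ F, ∑ p ∈ F, 2 * b * (g (x + m) * g (x + p))
          = 2 * b * ((∑ m ∈ F, g (x + m)) * (∑ p ∈ F, g (x + p))) := by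
        rw [Finset.sum_mul_sum, Finset.mul_sum]
        apply Finset.sum_congr rfl
        intro m _
        rw [Finset.mul_sum]
      rw [heq, hsum1]; ring
    have h2b : (∑ m ∈ F, ∑ p ∈ F, a (p - m) * (g (x + m) * g (x + p)))
        + (∑ m ∈ F, ∑ p ∈ F, a (m - p) * (g (x + m) * g (x + p))) = 2 * b := by
      rw [hdouble, hfinal]
    rw [hstep]
    linarith [hswap, h2b]
  have hcnt : Set.Countable (⋃ m : ℤ, ({(N:ℝ)/2 - m, -(N:ℝ)/2 - m} : Set ℝ)) :=
    Set.countable_iUnion fun m => (Set.countable_singleton _).insert _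
  rw [ae_iff]
  refine measure_mono_null ?_ (hcnt.measure_zero volume)
  intro x hx
  simp only [Set.mem_setOf_eq] at hx
  by_contra hxmem
  apply hx
  apply key
  intro m
  constructor
  · intro h
    apply hxmem
    refine Set.mem_iUnion.mpr ⟨m, ?_⟩
    rw [Set.mem_insert_iff]
    left; linarith
  · intro h
    apply hxmem
    refine Set.mem_iUnion.mpr ⟨m, ?_⟩
    rw [Set.mem_insert_iff]
    right
    rw [Set.mem_singleton_iff]
    linarith
end

section
/- Let g : ℝ → ℝ be supported in [-N/2, N/2] with partition of unity ∑_{n∈ℤ} g(x-n) = 1, and let b > 0. Define h(x) = b g(x) + 2b ∑_{n=1}^{N-1} g(x+n). Then for almost every x, ∑_{m∈ℤ} g(x+m) h(x+m) = b. -/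
open MeasureTheory Set

lemma key_lemma (N : ℕ) (b : ℝ) (u : ℤ → ℝ) (S : Finset ℤ)
    (hsupp : ∀ m, u m ≠ 0 → m ∈ S)
    (hsep : ∀ m k : ℤ, u m ≠ 0 → u k ≠ 0 → |m - k| < (N : ℤ))
    (hsum : ∑ m ∈ S, u m = 1) :
    ∑ m ∈ S, u m * (b * u m + 2 * b * ∑ n ∈ Finset.Icc 1 ((N : ℤ) - 1), u (m + n)) = b := by
  classical
  set f : ℤ × ℤ → ℝ := fun p => u p.1 * u p.2 with hf
  set P : Finset (ℤ × ℤ) := S ×ˢ S with hP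
  set L : Finset (ℤ × ℤ) := P.filter (fun p => p.1 < p.2) with hL
  have hsq : ∑ p ∈ P, f p = 1 := by
    rw [hP, Finset.sum_product, ← Finset.sum_mul_sum, hsum, one_mul]
  -- diagonal
  have hdiag : ∑ p ∈ P.filter (fun p => p.1 = p.2), f p = ∑ m ∈ S, u m * u m := by
    apply Finset.sum_nbij' (i := fun p => p.1) (j := fun m => (m, m))
    · intro a ha
      simp only [hP, Finset.mem_filter, Finset.mem_product] at ha
      exact ha.1.1
    · intro a ha
      simp only [hP, Finset.mem_filter, Finset.mem_product]
      exact ⟨⟨ha, ha⟩, trivial⟩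
    · intro a ha
      simp only [Finset.mem_filter] at ha
      exact Prod.ext rfl ha.2
    · intro a ha; rfl
    · intro a ha
      simp only [Finset.mem_filter] at ha
      simp [hf, ha.2]
  -- symmetry
  have hGL : ∑ p ∈ P.filter (fun p => p.2 < p.1), f p = ∑ p ∈ L, f p := by
    apply Finset.sum_nbij' (i := fun p => (p.2, p.1)) (j := fun p => (p.2, p.1))
    · intro a ha
      simp only [hP, hL, Finset.mem_filter, Finset.mem_product] at ha ⊢
      exact ⟨⟨ha.1.2, ha.1.1⟩, ha.2⟩
    · intro a ha
      simp only [hP, hL, Finset.mem_filter, Finset.mem_product] at ha ⊢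
      exact ⟨⟨ha.1.2, ha.1.1⟩, ha.2⟩
    · intro a ha; rfl
    · intro a ha; rfl
    · intro a ha; simp [hf, mul_comm]
  -- split the square
  have hsplit : (1 : ℝ) = ∑ m ∈ S, u m * u m + 2 * ∑ p ∈ L, f p := by
    rw [← hsq, ← Finset.sum_filter_add_sum_filter_not P (fun p => p.1 < p.2) f]
    have h2 : P.filter (fun p => ¬ p.1 < p.2)
        = P.filter (fun p => p.1 = p.2) ∪ P.filter (fun p => p.2 < p.1) := by
      ext p
      simp only [Finset.mem_filter, Finset.mem_union]
      constructor
      · rintro ⟨hp, hlt⟩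
        rcases lt_or_eq_of_le (not_lt.mp hlt) with h | h
        · exact Or.inr ⟨hp, h⟩
        · exact Or.inl ⟨hp, h.symm⟩
      · rintro (⟨hp, h⟩ | ⟨hp, h⟩) <;> exact ⟨hp, by omega⟩
    have hdisj : Disjoint (P.filter (fun p => p.1 = p.2)) (P.filter (fun p => p.2 < p.1)) := by
      rw [Finset.disjoint_filter]
      intro p _ h
      omega
    rw [h2, Finset.sum_union hdisj, hdiag, hGL, ← hL]
    ring
  -- cross term
  have hcross : ∑ m ∈ S, ∑ n ∈ Finset.Icc 1 ((N : ℤ) - 1), u m * u (m + n)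
      = ∑ p ∈ L, f p := by
    rw [← Finset.sum_product']
    rw [← Finset.sum_filter_ne_zero (S ×ˢ Finset.Icc 1 ((N:ℤ)-1)) (f := fun p => u p.1 * u (p.1 + p.2))]
    rw [← Finset.sum_filter_ne_zero L (f := f)]
    apply Finset.sum_nbij' (i := fun p => (p.1, p.1 + p.2)) (j := fun q => (q.1, q.2 - q.1))
    · intro a ha
      simp only [Finset.mem_filter, Finset.mem_product, Finset.mem_Icc] at ha
      obtain ⟨⟨hS, hn⟩, hne⟩ := ha
      have h1 : u a.1 ≠ 0 := fun hz => hne (by simp [hz])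
      have h2 : u (a.1 + a.2) ≠ 0 := fun hz => hne (by simp [hz])
      simp only [hL, hP, Finset.mem_filter, Finset.mem_product, hf]
      exact ⟨⟨⟨hsupp _ h1, hsupp _ h2⟩, by omega⟩, hne⟩
    · intro q hq
      simp only [hL, hP, hf, Finset.mem_filter, Finset.mem_product] at hq
      obtain ⟨⟨⟨hS1, hS2⟩, hlt⟩, hne⟩ := hq
      have h1 : u q.1 ≠ 0 := fun hz => hne (by simp [hz])
      have h2 : u q.2 ≠ 0 := fun hz => hne (by simp [hz])
      have hd := hsep q.1 q.2 h1 h2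
      rw [abs_lt] at hd
      simp only [Finset.mem_filter, Finset.mem_product, Finset.mem_Icc]
      refine ⟨⟨hS1, by omega, by omega⟩, ?_⟩
      simpa using hne
    · intro a ha; simp
    · intro a ha; simp
    · intro a ha; simp [hf]
  have expand : ∑ m ∈ S, u m * (b * u m + 2 * b * ∑ n ∈ Finset.Icc 1 ((N : ℤ) - 1), u (m + n))
      = b * ∑ m ∈ S, u m * u m + 2 * b * ∑ m ∈ S, ∑ n ∈ Finset.Icc 1 ((N : ℤ) - 1), u m * u (m + n) := by
    rw [Finset.mul_sum, Finset.mul_sum, ← Finset.sum_add_distrib]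
    apply Finset.sum_congr rfl
    intro m _
    have hs : u m * ∑ n ∈ Finset.Icc 1 ((N:ℤ)-1), u (m + n)
        = ∑ n ∈ Finset.Icc 1 ((N:ℤ)-1), u m * u (m + n) := Finset.mul_sum _ _ _
    rw [← hs]
    ring
  rw [expand, hcross]
  linear_combination (-b) * hsplit

theorem stmt_3 (N : ℕ) (hN : 0 < N) (g : ℝ → ℝ)
    (hbdd : ∃ C : ℝ, ∀ x, |g x| ≤ C)
    (hsupp : ∀ x : ℝ, x ∉ Set.Icc (-(N : ℝ) / 2) ((N : ℝ) / 2) → g x = 0)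
    (hPoU : ∀ x : ℝ, ∑' n : ℤ, g (x - n) = 1)
    (b : ℝ) (hb : 0 < b) (h : ℝ → ℝ)
    (hh : ∀ x : ℝ, h x = b * g x + 2 * b * ∑ n ∈ Finset.Icc 1 ((N : ℤ) - 1), g (x + n)) :
    ∀ᵐ x : ℝ, ∑' m : ℤ, g (x + m) * h (x + m) = b := by
  -- the bad set of x hitting the endpoints is countable
  have hbad : Set.Countable {x : ℝ | ∃ m : ℤ, x + m = (N : ℝ) / 2 ∨ x + m = -(N : ℝ) / 2} := by
    have hsub : {x : ℝ | ∃ m : ℤ, x + m = (N : ℝ) / 2 ∨ x + m = -(N : ℝ) / 2}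
        ⊆ ⋃ m : ℤ, {(N : ℝ) / 2 - m, -(N : ℝ) / 2 - m} := by
      rintro x ⟨m, hm | hm⟩ <;> refine Set.mem_iUnion.2 ⟨m, ?_⟩
      · exact Or.inl (by linarith)
      · exact Or.inr (by simp only [Set.mem_singleton_iff]; linarith)
    exact Set.Countable.mono hsub (Set.countable_iUnion fun m => (Set.toFinite _).countable)
  have hae : ∀ᵐ x : ℝ, ∀ m : ℤ, x + m ≠ (N : ℝ) / 2 ∧ x + m ≠ -(N : ℝ) / 2 := by
    have h0 : (MeasureTheory.volume) {x : ℝ | ∃ m : ℤ, x + m = (N : ℝ) / 2 ∨ x + m = -(N : ℝ) / 2} = 0 :=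
      Set.Countable.measure_zero hbad _
    rw [MeasureTheory.ae_iff]
    refine MeasureTheory.measure_mono_null ?_ h0
    intro y hy
    simp only [Set.mem_setOf_eq] at hy ⊢
    push_neg at hy
    obtain ⟨m, hm⟩ := hy
    by_cases hc : y + m = (N : ℝ) / 2
    · exact ⟨m, Or.inl hc⟩
    · exact ⟨m, Or.inr (hm hc)⟩
  filter_upwards [hae] with x hx
  set u : ℤ → ℝ := fun m => g (x + m) with hu
  set S : Finset ℤ := Finset.Icc ⌈-(N : ℝ) / 2 - x⌉ ⌊(N : ℝ) / 2 - x⌋ with hS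
  have hmem : ∀ m : ℤ, u m ≠ 0 → m ∈ S := by
    intro m hm
    have hx' : x + m ∈ Set.Icc (-(N : ℝ) / 2) ((N : ℝ) / 2) := by
      by_contra hc
      exact hm (hsupp _ hc)
    obtain ⟨h1, h2⟩ := hx'
    rw [hS, Finset.mem_Icc]
    constructor
    · exact Int.ceil_le.2 (by linarith)
    · exact Int.le_floor.2 (by linarith)
  have husupp : ∀ m ∉ S, u m = 0 := by
    intro m hm
    by_contra hc
    exact hm (hmem m hc)
  have hsep : ∀ m k : ℤ, u m ≠ 0 → u k ≠ 0 → |m - k| < (N : ℤ) := by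
    intro m k hm hk
    have hm' : x + m ∈ Set.Icc (-(N : ℝ) / 2) ((N : ℝ) / 2) := by
      by_contra hc; exact hm (hsupp _ hc)
    have hk' : x + k ∈ Set.Icc (-(N : ℝ) / 2) ((N : ℝ) / 2) := by
      by_contra hc; exact hk (hsupp _ hc)
    obtain ⟨hm1, hm2⟩ := hm'
    obtain ⟨hk1, hk2⟩ := hk'
    have e1 := (hx m).1
    have e2 := (hx m).2
    have e3 := (hx k).1
    have e4 := (hx k).2
    have hml : -(N : ℝ) / 2 < x + m := lt_of_le_of_ne hm1 (Ne.symm e2)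
    have hmr : x + (m : ℝ) < (N : ℝ) / 2 := lt_of_le_of_ne hm2 e1
    have hkl : -(N : ℝ) / 2 < x + k := lt_of_le_of_ne hk1 (Ne.symm e4)
    have hkr : x + (k : ℝ) < (N : ℝ) / 2 := lt_of_le_of_ne hk2 e3
    have habs : |(m : ℝ) - k| < (N : ℝ) := by
      rw [abs_lt]
      constructor <;> linarith
    have : |((m - k : ℤ) : ℝ)| < ((N : ℤ) : ℝ) := by push_cast; push_cast at habs; exact habs
    exact_mod_cast this
  have hsum1 : ∑ m ∈ S, u m = 1 := by
    have h1 : ∑' n : ℤ, g (x + n) = 1 := by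
      rw [← (Equiv.neg ℤ).tsum_eq (fun n : ℤ => g (x + n))]
      rw [← hPoU x]
      apply tsum_congr
      intro n
      simp only [Equiv.neg_apply]
      norm_num [sub_eq_add_neg]
    rw [← h1]
    exact (tsum_eq_sum husupp).symm
  have hrw : ∀ m : ℤ, g (x + m) * h (x + m)
      = u m * (b * u m + 2 * b * ∑ n ∈ Finset.Icc 1 ((N : ℤ) - 1), u (m + n)) := by
    intro m
    rw [hh]
    have hcongr : ∀ n ∈ Finset.Icc 1 ((N : ℤ) - 1), g ((x + (m : ℝ)) + n) = u (m + n) := by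
      intro n _
      simp only [hu]
      push_cast
      ring_nf
    rw [Finset.sum_congr rfl hcongr]
  have hgoal : ∑' m : ℤ, g (x + m) * h (x + m)
      = ∑ m ∈ S, u m * (b * u m + 2 * b * ∑ n ∈ Finset.Icc 1 ((N : ℤ) - 1), u (m + n)) := by
    rw [tsum_congr hrw]
    apply tsum_eq_sum
    intro m hm
    rw [husupp m hm, zero_mul]
  rw [hgoal]
  exact key_lemma N b u S hmem hsep hsum1
end

section
/- For p > 0, the third-order exponential B-spline ε₃' = χ_{[0,1]} * (e^{px}χ_{[0,1]}) * (e^{-px}χ_{[0,1]}) equals (e^{px} + e^{-px} - 2)/(2p²) on [0,1]. -/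
open Set MeasureTheory

noncomputable def conv (f g : ℝ → ℝ) : ℝ → ℝ := fun x => ∫ t, f t * g (x - t)

noncomputable def eps3' (p : ℝ) : ℝ → ℝ :=
  conv (conv (Set.indicator (Set.Icc (0 : ℝ) 1) (fun _ => 1))
      (Set.indicator (Set.Icc (0 : ℝ) 1) (fun x => Real.exp (p * x))))
    (Set.indicator (Set.Icc (0 : ℝ) 1) (fun x => Real.exp (-p * x)))

lemma int_exp (c a b : ℝ) (hc : c ≠ 0) :
    ∫ x in a..b, Real.exp (c * x) = (Real.exp (c * b) - Real.exp (c * a)) / c := by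
  have h : ∀ x ∈ Set.uIcc a b,
      HasDerivAt (fun y => Real.exp (c * y) / c) (Real.exp (c * x)) x := by
    intro x _
    have h1 : HasDerivAt (fun y : ℝ => c * y) c x := by
      simpa using (hasDerivAt_id x).const_mul c
    have h2 := (Real.hasDerivAt_exp (c * x)).comp x h1
    have h3 := h2.div_const c
    simpa [mul_div_cancel_right₀ _ hc] using h3
  rw [intervalIntegral.integral_eq_sub_of_hasDerivAt h
    (Continuous.intervalIntegrable (by continuity) a b)]
  ring

lemma inner_eval (p t : ℝ) (hp : 0 < p) (ht : t ∈ Set.Icc (0 : ℝ) 1) :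
    conv (Set.indicator (Set.Icc (0 : ℝ) 1) (fun _ => 1))
      (Set.indicator (Set.Icc (0 : ℝ) 1) (fun x => Real.exp (p * x))) t
      = (Real.exp (p * t) - 1) / p := by
  obtain ⟨ht0, ht1⟩ := ht
  have key : (fun s => (Set.indicator (Set.Icc (0 : ℝ) 1) (fun _ => (1 : ℝ)) s) *
      (Set.indicator (Set.Icc (0 : ℝ) 1) (fun x => Real.exp (p * x)) (t - s)))
      = Set.indicator (Set.Icc 0 t) (fun s => Real.exp (p * (t - s))) := by
    funext s
    by_cases hs : s ∈ Set.Icc (0 : ℝ) t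
    · obtain ⟨hs0, hst⟩ := hs
      rw [Set.indicator_of_mem (Set.mem_Icc.mpr ⟨hs0, hst.trans ht1⟩),
          Set.indicator_of_mem (Set.mem_Icc.mpr ⟨by linarith, by linarith⟩),
          Set.indicator_of_mem (Set.mem_Icc.mpr ⟨hs0, hst⟩)]
      ring
    · rw [Set.indicator_of_notMem hs]
      simp only [Set.mem_Icc, not_and_or, not_le] at hs
      rcases hs with h | h
      · rw [Set.indicator_of_notMem
          (fun hm => absurd hm.1 (not_le.mpr h)), zero_mul]
      · rw [Set.indicator_of_notMem
          (show t - s ∉ Set.Icc (0:ℝ) 1 from fun hm => by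
            have := hm.1; linarith), mul_zero]
  unfold conv
  rw [key, MeasureTheory.integral_indicator measurableSet_Icc,
      MeasureTheory.integral_Icc_eq_integral_Ioc,
      ← intervalIntegral.integral_of_le ht0]
  have e2 : ∀ s, Real.exp (p * (t - s)) = Real.exp (p * t) * Real.exp ((-p) * s) := by
    intro s; rw [← Real.exp_add]; ring_nf
  simp_rw [e2]
  rw [intervalIntegral.integral_const_mul, int_exp (-p) 0 t (by linarith)]
  have hp' : p ≠ 0 := ne_of_gt hp
  rw [mul_zero, Real.exp_zero, neg_mul, Real.exp_neg]
  have hEpos : Real.exp (p * t) ≠ 0 := (Real.exp_pos _).ne'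
  field_simp
  ring

lemma inner_zero (p t : ℝ) (ht : t < 0) :
    conv (Set.indicator (Set.Icc (0 : ℝ) 1) (fun _ => 1))
      (Set.indicator (Set.Icc (0 : ℝ) 1) (fun x => Real.exp (p * x))) t = 0 := by
  unfold conv
  have key : (fun s => (Set.indicator (Set.Icc (0 : ℝ) 1) (fun _ => (1 : ℝ)) s) *
      (Set.indicator (Set.Icc (0 : ℝ) 1) (fun x => Real.exp (p * x)) (t - s)))
      = fun _ => (0 : ℝ) := by
    funext s
    by_cases hs : s ∈ Set.Icc (0 : ℝ) 1
    · rw [Set.indicator_of_notMem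
        (show t - s ∉ Set.Icc (0:ℝ) 1 from fun hm => by
          have h1 := hm.1; have h2 := hs.1; simp only [Set.mem_Icc] at *; linarith),
        mul_zero]
    · rw [Set.indicator_of_notMem hs, zero_mul]
  rw [key, integral_zero]

theorem stmt_16 (p : ℝ) (hp : 0 < p) :
    ∀ x ∈ Set.Icc (0 : ℝ) 1,
      eps3' p x = (Real.exp (p * x) + Real.exp (-p * x) - 2) / (2 * p ^ 2) := by
  intro x hx
  obtain ⟨hx0, hx1⟩ := hx
  have hp' : p ≠ 0 := ne_of_gt hp
  unfold eps3'
  show (∫ t, conv (Set.indicator (Set.Icc (0 : ℝ) 1) (fun _ => 1))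
      (Set.indicator (Set.Icc (0 : ℝ) 1) (fun y => Real.exp (p * y))) t *
      (Set.indicator (Set.Icc (0 : ℝ) 1) (fun y => Real.exp (-p * y)) (x - t))) = _
  have key : (fun t => conv (Set.indicator (Set.Icc (0 : ℝ) 1) (fun _ => 1))
      (Set.indicator (Set.Icc (0 : ℝ) 1) (fun y => Real.exp (p * y))) t *
      (Set.indicator (Set.Icc (0 : ℝ) 1) (fun y => Real.exp (-p * y)) (x - t)))
      = Set.indicator (Set.Icc 0 x)
          (fun t => (Real.exp (p * t) - 1) / p * Real.exp (-p * (x - t))) := by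
    funext t
    by_cases ht : t ∈ Set.Icc (0 : ℝ) x
    · obtain ⟨ht0, htx⟩ := ht
      rw [inner_eval p t hp ⟨ht0, htx.trans hx1⟩,
          Set.indicator_of_mem (Set.mem_Icc.mpr ⟨by linarith, by linarith⟩),
          Set.indicator_of_mem (Set.mem_Icc.mpr ⟨ht0, htx⟩)]
    · rw [Set.indicator_of_notMem ht]
      simp only [Set.mem_Icc, not_and_or, not_le] at ht
      rcases ht with h | h
      · rw [inner_zero p t h, zero_mul]
      · rw [Set.indicator_of_notMem
          (show x - t ∉ Set.Icc (0:ℝ) 1 from fun hm => by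
            have := hm.1; linarith), mul_zero]
  rw [key, MeasureTheory.integral_indicator measurableSet_Icc,
      MeasureTheory.integral_Icc_eq_integral_Ioc,
      ← intervalIntegral.integral_of_le hx0]
  have key2 : ∀ t, (Real.exp (p * t) - 1) / p * Real.exp (-p * (x - t))
      = Real.exp (-p * x) / p * (Real.exp ((2 * p) * t) - Real.exp (p * t)) := by
    intro t
    have e1 : Real.exp ((2 * p) * t) = Real.exp (p * t) * Real.exp (p * t) := by
      rw [← Real.exp_add]; ring_nf
    have e2 : Real.exp (-p * (x - t)) = Real.exp (-p * x) * Real.exp (p * t) := by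
      rw [← Real.exp_add]; ring_nf
    rw [e1, e2]; ring
  simp_rw [key2]
  rw [intervalIntegral.integral_const_mul,
      intervalIntegral.integral_sub
        (Continuous.intervalIntegrable (by continuity) 0 x)
        (Continuous.intervalIntegrable (by continuity) 0 x),
      int_exp (2 * p) 0 x (by linarith), int_exp p 0 x hp']
  have hE1 : Real.exp ((2 * p) * x) = Real.exp (p * x) * Real.exp (p * x) := by
    rw [← Real.exp_add]; ring_nf
  have hE2 : Real.exp (-p * x) = (Real.exp (p * x))⁻¹ := by
    rw [neg_mul, Real.exp_neg]
  rw [hE1, hE2, mul_zero, mul_zero, Real.exp_zero]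
  have hEpos : Real.exp (p * x) ≠ 0 := (Real.exp_pos _).ne'
  field_simp
  ring
end

section
/- Let g : ℝ → ℝ be continuous, supported exactly on [-N/2, N/2], strictly positive on (-N/2, N/2), and satisfy ∑_{n∈ℤ} g(x - n) = 1. Then G(x) := ∑_{n∈ℤ} |g(x - n)|² satisfies 1/(2N-1) ≤ G(x) ≤ 1 for all x ∈ ℝ; in particular G is bounded above and below by positive constants. -/
open Set

theorem stmt_18 (N : ℕ) (hN : 1 ≤ N) (g : ℝ → ℝ)
    (hcont : Continuous g)
    (hsupp : ∀ x : ℝ, x ∉ Set.Icc (-(N : ℝ) / 2) ((N : ℝ) / 2) → g x = 0)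
    (hpos : ∀ x ∈ Set.Ioo (-(N : ℝ) / 2) ((N : ℝ) / 2), 0 < g x)
    (hPoU : ∀ x : ℝ, ∑' n : ℤ, g (x - n) = 1) :
    ∀ x : ℝ, 1 / (2 * (N : ℝ) - 1) ≤ ∑' n : ℤ, |g (x - n)| ^ 2 ∧
      ∑' n : ℤ, |g (x - n)| ^ 2 ≤ 1 := by
  -- g vanishes outside the open interval
  have hg0 : ∀ y : ℝ, y ∉ Set.Ioo (-(N : ℝ) / 2) ((N : ℝ) / 2) → g y = 0 := by
    intro y hy
    by_cases hy' : y ∈ Set.Icc (-(N : ℝ) / 2) ((N : ℝ) / 2)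
    · obtain ⟨h1, h2⟩ := hy'
      rcases h1.lt_or_eq with h1 | h1
      · rcases h2.lt_or_eq with h2 | h2
        · exact absurd ⟨h1, h2⟩ hy
        · -- y = N/2, right endpoint: use continuity from the right
          have ht1 : Filter.Tendsto g (nhdsWithin y (Set.Ioi y)) (nhds (g y)) :=
            (hcont.tendsto y).mono_left nhdsWithin_le_nhds
          have ht2 : Filter.Tendsto g (nhdsWithin y (Set.Ioi y)) (nhds 0) := by
            refine Filter.Tendsto.congr' ?_ tendsto_const_nhds
            filter_upwards [self_mem_nhdsWithin] with z hz
            exact (hsupp z (fun hmem => absurd hmem.2 (by simp only [Set.mem_Ioi] at hz; linarith))).symm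
          exact tendsto_nhds_unique ht1 ht2
      · -- y = -N/2, left endpoint: use continuity from the left
        have ht1 : Filter.Tendsto g (nhdsWithin y (Set.Iio y)) (nhds (g y)) :=
          (hcont.tendsto y).mono_left nhdsWithin_le_nhds
        have ht2 : Filter.Tendsto g (nhdsWithin y (Set.Iio y)) (nhds 0) := by
          refine Filter.Tendsto.congr' ?_ tendsto_const_nhds
          filter_upwards [self_mem_nhdsWithin] with z hz
          exact (hsupp z (fun hmem => absurd hmem.1 (by simp only [Set.mem_Iio] at hz; linarith))).symm
        exact tendsto_nhds_unique ht1 ht2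
    · exact hsupp y hy'
  have hgnn : ∀ y : ℝ, 0 ≤ g y := by
    intro y
    by_cases hy : y ∈ Set.Ioo (-(N : ℝ) / 2) ((N : ℝ) / 2)
    · exact (hpos y hy).le
    · exact (hg0 y hy).ge
  -- finite localization
  have hloc : ∀ x : ℝ, ∀ n : ℤ, n ∉ Finset.Ioo ⌊x - (N : ℝ) / 2⌋ (⌊x - (N : ℝ) / 2⌋ + 1 + N) →
      g (x - n) = 0 := by
    intro x n hn
    apply hg0
    intro hmem
    apply hn
    obtain ⟨h1, h2⟩ := hmem
    have hb1 : x - (N : ℝ) / 2 < n := by linarith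
    have hb2 : (n : ℝ) < x + (N : ℝ) / 2 := by linarith
    have hf1 : ⌊x - (N : ℝ) / 2⌋ < n := Int.floor_lt.mpr hb1
    have hf2 : x - (N : ℝ) / 2 < ⌊x - (N : ℝ) / 2⌋ + 1 := Int.lt_floor_add_one _
    have hf3 : (n : ℝ) < (⌊x - (N : ℝ) / 2⌋ : ℝ) + 1 + N := by linarith
    refine Finset.mem_Ioo.mpr ⟨hf1, ?_⟩
    exact_mod_cast hf3
  have hsumm : ∀ x : ℝ, Summable (fun n : ℤ => g (x - n)) := fun x =>
    summable_of_ne_finset_zero (hloc x)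
  have hsummsq : ∀ x : ℝ, Summable (fun n : ℤ => |g (x - n)| ^ 2) := fun x =>
    summable_of_ne_finset_zero (fun n hn => by rw [hloc x n hn]; simp)
  -- g ≤ 1
  have hg1 : ∀ y : ℝ, g y ≤ 1 := by
    intro y
    have := Summable.le_tsum (hsumm y) 0 (fun n _ => hgnn _)
    simpa [hPoU y] using this
  intro x
  set a : ℤ := ⌊x - (N : ℝ) / 2⌋ with ha
  set s : Finset ℤ := Finset.Ioo a (a + 1 + N) with hs
  have hcard : s.card = N := by
    rw [hs, Int.card_Ioo]
    omega
  have hsum_eq : ∑' n : ℤ, g (x - n) = ∑ n ∈ s, g (x - n) := tsum_eq_sum (hloc x)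
  have hsq_eq : ∑' n : ℤ, |g (x - n)| ^ 2 = ∑ n ∈ s, g (x - n) ^ 2 := by
    rw [tsum_eq_sum (s := s) (fun n hn => by rw [hloc x n hn]; simp)]
    exact Finset.sum_congr rfl fun n _ => by rw [sq_abs]
  constructor
  · -- lower bound via Cauchy–Schwarz
    have hCS : (∑ n ∈ s, g (x - n)) ^ 2 ≤ s.card * ∑ n ∈ s, g (x - n) ^ 2 :=
      sq_sum_le_card_mul_sum_sq
    rw [← hsum_eq, hPoU x, hcard] at hCS
    rw [hsq_eq]
    have hTnn : (0 : ℝ) ≤ ∑ n ∈ s, g (x - n) ^ 2 :=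
      Finset.sum_nonneg fun n _ => sq_nonneg _
    have hNpos : (1 : ℝ) ≤ (N : ℝ) := by exact_mod_cast hN
    rw [div_le_iff₀ (by linarith)]
    simp only [one_pow] at hCS
    nlinarith
  · -- upper bound
    have hle : ∀ n : ℤ, |g (x - n)| ^ 2 ≤ g (x - n) := by
      intro n
      rw [sq_abs, sq]
      calc g (x - n) * g (x - n) ≤ 1 * g (x - n) :=
            mul_le_mul_of_nonneg_right (hg1 _) (hgnn _)
        _ = g (x - n) := one_mul _
    calc ∑' n : ℤ, |g (x - n)| ^ 2 ≤ ∑' n : ℤ, g (x - n) :=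
          Summable.tsum_le_tsum hle (hsummsq x) (hsumm x)
      _ = 1 := hPoU x
end
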